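/- For all complex numbers x, y, a and every natural number n, a_n(x+y,a) = \sum_{k=0}^n \binom{n}{k} a_k(x,a) a_{n-k}(y,a), i.e. the Abel polynomials form a sequence of binomial type. -/

import Mathlib

/-- Classical Abel polynomial `a_n(x,a)`, with `a_0 = 1`. -/
noncomputable def abelPoly (x a : ℂ) (n : ℕ) : ℂ :=
  if n = 0 then 1 else x * (x + n * a) ^ (n - 1)

open Finset Polynomial

lemma fd_pow (h : ℂ) : ∀ n : ℕ, ∀ m : ℕ, m < n → ∀ x : ℂ,
    (fwdDiff h)^[n] (fun t : ℂ => (x + t) ^ m) = 0 := by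
  intro n
  induction n with
  | zero => intro m hm; omega
  | succ n IH =>
    intro m hm x
    rw [Function.iterate_succ_apply]
    have heq : fwdDiff h (fun t : ℂ => (x + t) ^ m)
        = ∑ j ∈ range m, ((m.choose j : ℂ) * h ^ (m - j)) • (fun t : ℂ => (x + t) ^ j) := by
      funext t
      show (x + (t + h)) ^ m - (x + t) ^ m = _
      have hx : x + (t + h) = (x + t) + h := by ring
      rw [hx, add_pow, sum_range_succ]
      simp only [Nat.choose_self, Nat.sub_self, pow_zero, Nat.cast_one, mul_one,
        Finset.sum_apply, Pi.smul_apply, smul_eq_mul]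
      rw [add_sub_cancel_right]
      exact Finset.sum_congr rfl fun j hj => by ring
    rw [heq, fwdDiff_iter_finset_sum]
    refine Finset.sum_eq_zero fun j hj => ?_
    rw [mem_range] at hj
    rw [fwdDiff_iter_const_smul, IH j (by omega) x, smul_zero]

lemma alt_sum (n m : ℕ) (hm : m < n) (x z : ℂ) :
    ∑ k ∈ range (n + 1), (-1 : ℂ) ^ (n - k) * (n.choose k : ℂ) * (x + k * z) ^ m = 0 := by
  have h1 := fwdDiff_iter_eq_sum_shift z (fun t : ℂ => (x + t) ^ m) n 0
  rw [fd_pow z n m hm x] at h1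
  simp only [Pi.zero_apply, zero_add, zsmul_eq_mul, smul_eq_mul] at h1
  refine Eq.trans (Finset.sum_congr rfl fun k _ => ?_) h1.symm
  push_cast [nsmul_eq_mul]
  ring

lemma coeff_nat (m k : ℕ) (hk : k ≤ m) :
    (m + 1).choose k * (m + 1 - k) = (m + 1) * m.choose k := by
  rw [← Nat.choose_succ_right_eq, Nat.add_one_mul_choose_eq]

lemma sum_step (m : ℕ) (x z w : ℂ) :
    ∑ k ∈ range (m + 2), ((m + 1).choose k : ℂ) * abelPoly x z k * ((m + 1 - k : ℕ) : ℂ)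
        * (w + ((m + 1 - k : ℕ) : ℂ) * z) ^ (m + 1 - k - 1)
      = (m + 1 : ℂ) * ∑ k ∈ range (m + 1),
          (m.choose k : ℂ) * abelPoly x z k * ((w + z) + ((m - k : ℕ) : ℂ) * z) ^ (m - k) := by
  rw [sum_range_succ]
  simp only [Nat.sub_self, Nat.cast_zero, mul_zero, zero_mul, add_zero]
  rw [mul_sum]
  refine sum_congr rfl fun k hk => ?_
  rw [mem_range] at hk
  have hk' : k ≤ m := Nat.lt_succ_iff.mp hk
  have h1 : m + 1 - k - 1 = m - k := by omega
  have h2 : m + 1 - k = (m - k) + 1 := by omega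
  have h3 : ((m + 1).choose k : ℂ) * ((m + 1 - k : ℕ) : ℂ)
      = (m + 1 : ℂ) * (m.choose k : ℂ) := by
    have := coeff_nat m k hk'
    exact_mod_cast congrArg (Nat.cast : ℕ → ℂ) this
  rw [h2] at h3
  push_cast at h3
  rw [h1, h2]
  push_cast
  rw [show w + (((m - k : ℕ) : ℂ) + 1) * z = w + z + ((m - k : ℕ) : ℂ) * z from by ring]
  linear_combination (abelPoly x z k * (w + z + ((m - k : ℕ) : ℂ) * z) ^ (m - k)) * h3

open Polynomial in
lemma key : ∀ n : ℕ, ∀ x z y : ℂ,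
    ∑ k ∈ range (n + 1), (n.choose k : ℂ) * abelPoly x z k
        * (y + ((n - k : ℕ) : ℂ) * z) ^ (n - k) = (x + y + n * z) ^ n := by
  intro n
  induction n with
  | zero => intro x z y; simp [abelPoly]
  | succ m IH =>
    intro x z y
    set P : Polynomial ℂ :=
      (∑ k ∈ range (m + 2), C (((m + 1).choose k : ℂ) * abelPoly x z k) *
        (X + C (((m + 1 - k : ℕ) : ℂ) * z)) ^ (m + 1 - k))
      - (X + C (x + ((m : ℂ) + 1) * z)) ^ (m + 1) with hP
    have hevalP : ∀ t : ℂ, P.eval t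
        = (∑ k ∈ range (m + 2), ((m + 1).choose k : ℂ) * abelPoly x z k
            * (t + ((m + 1 - k : ℕ) : ℂ) * z) ^ (m + 1 - k))
          - (x + t + ((m : ℂ) + 1) * z) ^ (m + 1) := by
      intro t
      simp only [hP, eval_sub, eval_finset_sum, eval_mul, eval_pow, eval_add, eval_X, eval_C]
      congr 1; ring
    have hder : derivative P = 0 := by
      apply Polynomial.funext
      intro t
      simp only [hP, derivative_sub, derivative_sum, derivative_C_mul,
        derivative_X_add_C_pow, eval_sub, eval_finset_sum, eval_mul, eval_pow,
        eval_add, eval_X, eval_C, eval_natCast, eval_zero, Nat.add_sub_cancel]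
      rw [sub_eq_zero]
      calc ∑ k ∈ range (m + 2), ((m + 1).choose k : ℂ) * abelPoly x z k *
              (((m + 1 - k : ℕ) : ℂ) * (t + ((m + 1 - k : ℕ) : ℂ) * z) ^ (m + 1 - k - 1))
          = ∑ k ∈ range (m + 2), ((m + 1).choose k : ℂ) * abelPoly x z k
              * ((m + 1 - k : ℕ) : ℂ) * (t + ((m + 1 - k : ℕ) : ℂ) * z) ^ (m + 1 - k - 1) := by
            exact sum_congr rfl fun k _ => by ring
        _ = ((m : ℂ) + 1) * ∑ k ∈ range (m + 1), (m.choose k : ℂ) * abelPoly x z k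
              * ((t + z) + ((m - k : ℕ) : ℂ) * z) ^ (m - k) := by
            exact_mod_cast sum_step m x z t
        _ = ((m : ℂ) + 1) * (x + (t + z) + (m : ℂ) * z) ^ m := by rw [IH x z (t + z)]
        _ = _ := by
            rw [show x + (t + z) + (m : ℂ) * z = t + (x + ((m : ℂ) + 1) * z) from by ring]
            push_cast
            ring
    have habel : ∀ k ≤ m + 1, abelPoly x z k * (x + (k : ℂ) * z) ^ (m + 1 - k)
        = (x + (k : ℂ) * z) ^ m * x := by
      intro k hk
      match k with
      | 0 =>
        simp [abelPoly, pow_succ]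
      | (j + 1) =>
        simp only [abelPoly, if_neg (Nat.succ_ne_zero j), Nat.add_sub_cancel]
        rw [mul_assoc, ← pow_add, show j + (m + 1 - (j + 1)) = m from by omega]
        push_cast
        ring
    have hC : P = Polynomial.C (P.coeff 0) := eq_C_of_derivative_eq_zero hder
    have hy0 : P.eval (-x - ((m : ℂ) + 1) * z) = 0 := by
      rw [hevalP]
      rw [show (x + (-x - ((m : ℂ) + 1) * z) + ((m : ℂ) + 1) * z) = 0 from by ring,
        zero_pow (by omega : m + 1 ≠ 0), sub_zero]
      have h3 : ∀ k ∈ range (m + 2), ((m + 1).choose k : ℂ) * abelPoly x z k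
            * ((-x - ((m : ℂ) + 1) * z) + ((m + 1 - k : ℕ) : ℂ) * z) ^ (m + 1 - k)
          = ((-1 : ℂ) ^ (m + 1 - k) * ((m + 1).choose k : ℂ) * (x + (k : ℂ) * z) ^ m) * x := by
        intro k hk
        rw [mem_range] at hk
        have hk' : k ≤ m + 1 := by omega
        have harg : (-x - ((m : ℂ) + 1) * z) + ((m + 1 - k : ℕ) : ℂ) * z
            = -(x + (k : ℂ) * z) := by
          rw [Nat.cast_sub hk']; push_cast; ring
        rw [harg, neg_pow]
        linear_combination ((-1 : ℂ) ^ (m + 1 - k) * ((m + 1).choose k : ℂ)) * habel k hk'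
      rw [sum_congr rfl h3, ← sum_mul, alt_sum (m + 1) m (by omega) x z, zero_mul]
    have hP0 : P = 0 := by
      have hc0 : P.coeff 0 = 0 := by
        rw [hC] at hy0; simpa using hy0
      rw [hC, hc0, map_zero]
    have hfin := hevalP y
    rw [hP0, Polynomial.eval_zero] at hfin
    have := (sub_eq_zero.mp hfin.symm)
    push_cast
    rw [this]

lemma split (y a : ℂ) (j : ℕ) : abelPoly y a j
    = (y + (j : ℂ) * a) ^ j - (j : ℂ) * a * (y + (j : ℂ) * a) ^ (j - 1) := by
  match j with
  | 0 => simp [abelPoly]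
  | (i + 1) =>
    simp only [abelPoly, if_neg (Nat.succ_ne_zero i), Nat.add_sub_cancel]
    rw [pow_succ]
    push_cast
    ring

/-- The Abel polynomials are of binomial type. -/
theorem abel_binomial (x y a : ℂ) (n : ℕ) :
    abelPoly (x + y) a n =
      ∑ k ∈ Finset.range (n + 1),
        (n.choose k : ℂ) * abelPoly x a k * abelPoly y a (n - k) := by
  match n with
  | 0 => simp [abelPoly]
  | (m + 1) =>
    have h4 : ∀ k ∈ range (m + 2), ((m + 1).choose k : ℂ) * abelPoly x a k
          * abelPoly y a (m + 1 - k)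
        = ((m + 1).choose k : ℂ) * abelPoly x a k
            * (y + ((m + 1 - k : ℕ) : ℂ) * a) ^ (m + 1 - k)
          - (((m + 1).choose k : ℂ) * abelPoly x a k * ((m + 1 - k : ℕ) : ℂ)
              * (y + ((m + 1 - k : ℕ) : ℂ) * a) ^ (m + 1 - k - 1)) * a := by
      intro k _
      rw [split y a (m + 1 - k)]
      ring
    rw [sum_congr rfl h4, sum_sub_distrib, key (m + 1) x a y, ← sum_mul, sum_step m x a y,
      key m x a (y + a)]
    have h5 : (x + (y + a) + (m : ℂ) * a) = x + y + ((m : ℂ) + 1) * a := by ring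
    rw [h5]
    simp only [abelPoly, if_neg (Nat.succ_ne_zero m), Nat.add_sub_cancel]
    push_cast
    rw [pow_succ]
    ring
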